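/- Under Assumptions 1, 2, 3 and 4, for each i = 1,…,m and all k ≥ 2, the IN iterates satisfy ‖x_i^k − x_1^k‖ ≤ γ^k B_i^k(φ) ‖∇f(x_1^k)‖, where B_i^k(φ) is defined by the recursion B_1^k(φ) = 0 and B_{i+1}^k(φ) = (1 + (2Q/m)·max(1/k, φ))·B_i^k(φ) + 2M/(cm); moreover the limits B_i(φ) := lim_{k→∞} B_i^k(φ) exist and satisfy B_1(φ) = 0 and B_{i+1}(φ) = (1 + (2Q/m)φ)·B_i(φ) + 2M/(cm). -/

import Mathlib

open Finset Filter Classical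

noncomputable def Bseq (r s : ℝ) : ℕ → ℝ
  | 0 => 0
  | (i+1) => r * Bseq r s i + s

namespace INhelpers

open Matrix

lemma Bseq_nonneg {r s : ℝ} (hr : 0 ≤ r) (hs : 0 ≤ s) : ∀ j, 0 ≤ Bseq r s j
  | 0 => le_refl 0
  | (j+1) => by
      have := Bseq_nonneg hr hs j
      simp only [Bseq]
      positivity

variable {n : ℕ}

local notation "T" => Matrix.toEuclideanCLM (𝕜 := ℝ) (n := Fin n)

lemma inner_toE (A : Matrix (Fin n) (Fin n) ℝ) (x y : EuclideanSpace ℝ (Fin n)) :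
    (inner ℝ x (Matrix.toEuclideanCLM (𝕜 := ℝ) A y) : ℝ)
      = dotProduct (WithLp.equiv 2 _ x) (A *ᵥ (WithLp.equiv 2 _ y)) := by
  rw [EuclideanSpace.inner_eq_star_dotProduct]
  simp [Matrix.ofLp_toEuclideanCLM, Matrix.toLin'_apply, dotProduct_comm]

lemma qf_nonneg {A : Matrix (Fin n) (Fin n) ℝ} (hA : A.PosSemidef) (x : EuclideanSpace ℝ (Fin n)) :
    0 ≤ (inner ℝ x (Matrix.toEuclideanCLM (𝕜 := ℝ) A x) : ℝ) := by
  rw [inner_toE]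
  simpa using hA.dotProduct_mulVec_nonneg (WithLp.equiv 2 _ x)

lemma qf_le_upper {A : Matrix (Fin n) (Fin n) ℝ} {b : ℝ}
    (h : (b • (1 : Matrix (Fin n) (Fin n) ℝ) - A).PosSemidef) (x : EuclideanSpace ℝ (Fin n)) :
    (inner ℝ x (T A x) : ℝ) ≤ b * ‖x‖^2 := by
  have h0 := qf_nonneg h x
  have : T (b • (1 : Matrix (Fin n) (Fin n) ℝ) - A) x = b • x - T A x := by
    simp [map_sub, _root_.map_smul]
  rw [this, inner_sub_right, inner_smul_right] at h0
  rw [real_inner_self_eq_norm_sq] at h0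
  linarith

lemma qf_ge_lower {A : Matrix (Fin n) (Fin n) ℝ} {a : ℝ}
    (h : (A - a • (1 : Matrix (Fin n) (Fin n) ℝ)).PosSemidef) (x : EuclideanSpace ℝ (Fin n)) :
    a * ‖x‖^2 ≤ (inner ℝ x (T A x) : ℝ) := by
  have h0 := qf_nonneg h x
  have : T (A - a • (1 : Matrix (Fin n) (Fin n) ℝ)) x = T A x - a • x := by
    simp [map_sub, _root_.map_smul]
  rw [this, inner_sub_right, inner_smul_right] at h0
  rw [real_inner_self_eq_norm_sq] at h0
  linarith

lemma selfadj_toE {A : Matrix (Fin n) (Fin n) ℝ} (hA : A.IsHermitian)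
    (x y : EuclideanSpace ℝ (Fin n)) : (inner ℝ (T A x) y : ℝ) = inner ℝ x (T A y) := by
  have h1 : IsSelfAdjoint (T A) := by
    have : star (T A) = T (star A) := (map_star _ _).symm
    unfold _root_.IsSelfAdjoint
    rw [this]
    exact congrArg _ hA
  exact (ContinuousLinearMap.isSelfAdjoint_iff_isSymmetric.mp h1) x y

open scoped MatrixOrder in
lemma norm_toE_le {A : Matrix (Fin n) (Fin n) ℝ} (hA : A.PosSemidef) {b : ℝ} (hb : 0 ≤ b)
    (hub : (b • (1 : Matrix (Fin n) (Fin n) ℝ) - A).PosSemidef) (x : EuclideanSpace ℝ (Fin n)) :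
    ‖T A x‖ ≤ b * ‖x‖ := by
  set S := CFC.sqrt A with hSdef
  have hS : S.PosSemidef := (CFC.sqrt_nonneg A).posSemidef
  have hSS : S * S = A := CFC.sqrt_mul_sqrt_self A hA.nonneg
  have happ : ∀ z : EuclideanSpace ℝ (Fin n), T A z = T S (T S z) := by
    intro z
    rw [← hSS, _root_.map_mul]
    rfl
  have key : ∀ z : EuclideanSpace ℝ (Fin n), ‖T S z‖^2 = (inner ℝ z (T A z) : ℝ) := by
    intro z
    rw [← real_inner_self_eq_norm_sq, happ, selfadj_toE hS.1]
  have h1 : ‖T A x‖^2 ≤ b * ‖x‖ * ‖T A x‖ := by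
    set y := T A x with hy
    have e1 : ‖y‖^2 = (inner ℝ (T S x) (T S y) : ℝ) := by
      rw [← real_inner_self_eq_norm_sq, hy, selfadj_toE hA.1, happ y, selfadj_toE hS.1]
    have e2 : (inner ℝ (T S x) (T S y) : ℝ) ≤ ‖T S x‖ * ‖T S y‖ := real_inner_le_norm _ _
    have e3 : ‖T S x‖ * ‖T S y‖ ≤ b * ‖x‖ * ‖y‖ := by
      have q1 : ‖T S x‖^2 ≤ b * ‖x‖^2 := by rw [key] ; simpa [mul_comm] using qf_le_upper hub x
      have q2 : ‖T S y‖^2 ≤ b * ‖y‖^2 := by rw [key] ; simpa [mul_comm] using qf_le_upper hub y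
      have h4 : (‖T S x‖ * ‖T S y‖)^2 ≤ (b * ‖x‖ * ‖y‖)^2 := by
        have := mul_le_mul q1 q2 (sq_nonneg _) (by positivity)
        calc (‖T S x‖ * ‖T S y‖)^2 = ‖T S x‖^2 * ‖T S y‖^2 := by ring
        _ ≤ (b * ‖x‖^2) * (b * ‖y‖^2) := this
        _ = (b * ‖x‖ * ‖y‖)^2 := by ring
      exact le_of_pow_le_pow_left₀ two_ne_zero (by positivity) h4
    calc ‖y‖^2 = (inner ℝ (T S x) (T S y) : ℝ) := e1
    _ ≤ ‖T S x‖ * ‖T S y‖ := e2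
    _ ≤ b * ‖x‖ * ‖y‖ := e3
  rcases eq_or_lt_of_le (norm_nonneg (T A x)) with h0 | h0
  · rw [← h0]; positivity
  · nlinarith

lemma norm_inv_toE_le {A : Matrix (Fin n) (Fin n) ℝ} {a : ℝ} (ha : 0 < a)
    (hlow : (A - a • (1 : Matrix (Fin n) (Fin n) ℝ)).PosSemidef) (y : EuclideanSpace ℝ (Fin n)) :
    ‖T A⁻¹ y‖ ≤ ‖y‖ / a := by
  have hdiag : (a • (1 : Matrix (Fin n) (Fin n) ℝ)).PosDef := by
    rw [Matrix.smul_one_eq_diagonal]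
    exact Matrix.PosDef.diagonal (fun _ => ha)
  have hpd : A.PosDef := by
    have : A = (A - a • 1) + a • 1 := by abel
    rw [this]
    exact Matrix.PosDef.posSemidef_add hlow hdiag
  have hAAinv : A * A⁻¹ = 1 :=
    Matrix.mul_nonsing_inv A (Matrix.isUnit_iff_isUnit_det _ |>.mp hpd.isUnit)
  set w := T A⁻¹ y with hw
  have hTw : T A w = y := by
    rw [hw]
    have : T A (T A⁻¹ y) = T (A * A⁻¹) y := by rw [_root_.map_mul]; rfl
    rw [this, hAAinv, _root_.map_one]
    rfl
  have h1 : a * ‖w‖^2 ≤ (inner ℝ w (T A w) : ℝ) := qf_ge_lower hlow w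
  have h2 : (inner ℝ w y : ℝ) ≤ ‖w‖ * ‖y‖ := real_inner_le_norm _ _
  rw [hTw] at h1
  rcases eq_or_lt_of_le (norm_nonneg w) with h0 | h0
  · rw [← h0]; positivity
  · rw [le_div_iff₀ ha]
    nlinarith

lemma smul_one_psd {a : ℝ} (ha : 0 ≤ a) : (a • (1 : Matrix (Fin n) (Fin n) ℝ)).PosSemidef := by
  rw [Matrix.smul_one_eq_diagonal]
  exact Matrix.PosSemidef.diagonal (fun _ => ha)

lemma lip_of_hess {gi : EuclideanSpace ℝ (Fin n) → EuclideanSpace ℝ (Fin n)}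
    {hessi : EuclideanSpace ℝ (Fin n) → Matrix (Fin n) (Fin n) ℝ} {c C : ℝ}
    (hc : 0 < c) (hcC : c ≤ C)
    (hd : ∀ y, HasFDerivAt gi (T (hessi y)) y)
    (hpsd : ∀ y, (hessi y - c • (1 : Matrix (Fin n) (Fin n) ℝ)).PosSemidef)
    (hub : ∀ y, (C • (1 : Matrix (Fin n) (Fin n) ℝ) - hessi y).PosSemidef)
    (y z : EuclideanSpace ℝ (Fin n)) : ‖gi y - gi z‖ ≤ C * ‖y - z‖ := by
  have hCnn : (0:ℝ) ≤ C := le_trans hc.le hcC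
  have hbound : ∀ w : EuclideanSpace ℝ (Fin n), ‖T (hessi w)‖ ≤ C := by
    intro w
    apply ContinuousLinearMap.opNorm_le_bound _ hCnn
    intro u
    have hAp : (hessi w).PosSemidef := by
      have : hessi w = (hessi w - c • 1) + c • 1 := by abel
      rw [this]
      exact (hpsd w).add (smul_one_psd hc.le)
    exact norm_toE_le hAp hCnn (hub w) u
  exact Convex.norm_image_sub_le_of_norm_hasFDerivWithin_le
    (fun w _ => (hd w).hasFDerivWithinAt) (fun w _ => hbound w) convex_univ
    (Set.mem_univ z) (Set.mem_univ y)

end INhelpers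
set_option maxHeartbeats 2000000 in
theorem statement4
    (n m : ℕ) (hm : 1 < m)
    (f : ℕ → EuclideanSpace ℝ (Fin n) → ℝ)
    (g : ℕ → EuclideanSpace ℝ (Fin n) → EuclideanSpace ℝ (Fin n))
    (hess : ℕ → EuclideanSpace ℝ (Fin n) → Matrix (Fin n) (Fin n) ℝ)
    (hgrad : ∀ i ∈ Finset.Icc 1 m, ∀ y, HasGradientAt (f i) (g i y) y)
    (hhess : ∀ i ∈ Finset.Icc 1 m, ∀ y, HasFDerivAt (g i) (Matrix.toEuclideanCLM (𝕜 := ℝ) (hess i y)) y)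
    (hcont : ∀ i ∈ Finset.Icc 1 m, Continuous (hess i))
    (α : ℕ → ℝ) (hα : ∀ k, 1 ≤ k → 0 < α k)
    (x : ℕ → ℕ → EuclideanSpace ℝ (Fin n))
    (H : ℕ → ℕ → Matrix (Fin n) (Fin n) ℝ)
    (hH0 : H 1 0 = 0)
    (hHnext : ∀ k, 1 ≤ k → H (k+1) 0 = H k m)
    (hHrec : ∀ k, 1 ≤ k → ∀ i ∈ Finset.Icc 1 m, H k i = H k (i-1) + hess i (x k i))
    (hxnext : ∀ k, 1 ≤ k → x (k+1) 1 = x k (m+1))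
    (hiter : ∀ k, 1 ≤ k → ∀ i ∈ Finset.Icc 1 m,
      x k (i+1) = x k i - α k • (Matrix.toEuclideanCLM (𝕜 := ℝ) (H k i)⁻¹) (g i (x k i)))
    (X : Set (EuclideanSpace ℝ (Fin n))) (hX : IsCompact X)
    (hbound : ∀ k, 1 ≤ k → ∀ i ∈ Finset.Icc 1 m, x k i ∈ X)
    (c C : ℝ) (hc : 0 < c) (hcC : c ≤ C)
    (hlb : ∀ i ∈ Finset.Icc 1 m, ∀ y, (hess i y - c • 1).PosSemidef)
    (hub : ∀ i ∈ Finset.Icc 1 m, ∀ y, (C • (1 : Matrix (Fin n) (Fin n) ℝ) - hess i y).PosSemidef)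
    (η : ℝ) (hη : η ∈ Set.Ioo (0:ℝ) 1)
    (αstar : ℕ → ℝ)
    (hαstar : ∀ k, 1 ≤ k → αstar k =
      if x (k+1) 1 ≠ x k 1 then
        ((1 - η)/C) *
          (inner ℝ (x (k+1) 1 - x k 1) ((Matrix.toEuclideanCLM (𝕜 := ℝ) (H k m)) (x (k+1) 1 - x k 1)) : ℝ) /
          (‖x (k+1) 1 - x k 1‖ * (∑ i ∈ Finset.Icc 2 m, ‖x k i - x k 1‖)
            + ((m : ℝ)/2) * ‖x (k+1) 1 - x k 1‖^2)
      else 0)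
    (hstep : ∀ k, 1 ≤ k → 1 ≤ α k ∧ α k ≤ max 1 (αstar k))
    (M : ℝ) (hM : 0 < M)
    (hgg : ∀ i ∈ Finset.Icc 1 m, ∀ y, ‖g i y‖ ≤ M * ‖∑ j ∈ Finset.Icc 1 m, g j y‖)
    (Q φ : ℝ) (hQ : Q = C / c) (hφ : φ = 2 * (1 - η) * Q) :
    (∀ k, 2 ≤ k → ∀ i ∈ Finset.Icc 1 m,
      ‖x k i - x k 1‖ ≤ (α k / k) *
        Bseq (1 + (2*Q/m) * max (1/(k:ℝ)) φ) (2*M/(c*m)) (i-1) *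
        ‖∑ i ∈ Finset.Icc 1 m, g i (x k 1)‖) ∧
    (∀ i ∈ Finset.Icc 1 m,
      Filter.Tendsto (fun k : ℕ => Bseq (1 + (2*Q/m) * max (1/(k:ℝ)) φ) (2*M/(c*m)) (i-1))
        Filter.atTop (nhds (Bseq (1 + (2*Q/m) * φ) (2*M/(c*m)) (i-1)))) := by
  classical
  have hC : (0:ℝ) < C := lt_of_lt_of_le hc hcC
  have hm0 : (0:ℝ) < m := by exact_mod_cast Nat.zero_lt_of_lt hm
  have hQpos : 0 < Q := by rw [hQ]; positivity
  have hQ1 : 1 ≤ Q := by rw [hQ, le_div_iff₀ hc]; linarith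
  have hη1 : 0 < 1 - η := by have := hη.2; linarith
  have hφpos : 0 < φ := by rw [hφ]; positivity
  set s : ℝ := 2*M/(c*m) with hs_def
  have hs0 : 0 ≤ s := by rw [hs_def]; positivity
  -- lower bounds on H
  have hlow' : ∀ k, 1 ≤ k → ∀ i, i ≤ m →
      (H k i - ((((k-1)*m + i : ℕ) : ℝ) * c) • (1 : Matrix (Fin n) (Fin n) ℝ)).PosSemidef := by
    have inner_step : ∀ k, 1 ≤ k →
        (H k 0 - ((((k-1)*m : ℕ) : ℝ) * c) • (1 : Matrix (Fin n) (Fin n) ℝ)).PosSemidef →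
        ∀ i, i ≤ m →
        (H k i - ((((k-1)*m + i : ℕ) : ℝ) * c) • (1 : Matrix (Fin n) (Fin n) ℝ)).PosSemidef := by
      intro k hk hbase i
      induction i with
      | zero => intro _; simpa using hbase
      | succ i ih =>
        intro him
        have hi : i ≤ m := le_trans (Nat.le_succ i) him
        have h1 := hHrec k hk (i+1) (Finset.mem_Icc.mpr ⟨Nat.le_add_left 1 i, him⟩)
        simp only [Nat.add_sub_cancel] at h1
        rw [h1]
        have h2 := (ih hi).add
          (hlb (i+1) (Finset.mem_Icc.mpr ⟨Nat.le_add_left 1 i, him⟩) (x k (i+1)))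
        have hcast : ((((k-1)*m + (i+1) : ℕ) : ℝ) * c) = ((((k-1)*m + i : ℕ) : ℝ) * c) + c := by
          push_cast; ring
        rw [hcast, add_smul]
        convert h2 using 1
        abel
    have base0 : ∀ k, 1 ≤ k →
        (H k 0 - ((((k-1)*m : ℕ) : ℝ) * c) • (1 : Matrix (Fin n) (Fin n) ℝ)).PosSemidef := by
      intro k hk
      induction k, hk using Nat.le_induction with
      | base => rw [hH0]; simpa using Matrix.PosSemidef.zero
      | succ k hk ih =>
        rw [hHnext k hk]
        have h := inner_step k hk ih m le_rfl
        have he : (k-1)*m + m = (k+1-1)*m := by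
          rw [Nat.add_sub_cancel]
          calc (k-1)*m + m = (k-1+1)*m := (Nat.succ_mul _ _).symm
          _ = k*m := by rw [Nat.sub_add_cancel hk]
        rw [← he]
        simpa using h
    intro k hk
    exact inner_step k hk (base0 k hk)
  -- upper bounds on H
  have hup' : ∀ k, 1 ≤ k → ∀ i, i ≤ m →
      (((((k-1)*m + i : ℕ) : ℝ) * C) • (1 : Matrix (Fin n) (Fin n) ℝ) - H k i).PosSemidef := by
    have inner_step : ∀ k, 1 ≤ k →
        (((((k-1)*m : ℕ) : ℝ) * C) • (1 : Matrix (Fin n) (Fin n) ℝ) - H k 0).PosSemidef →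
        ∀ i, i ≤ m →
        (((((k-1)*m + i : ℕ) : ℝ) * C) • (1 : Matrix (Fin n) (Fin n) ℝ) - H k i).PosSemidef := by
      intro k hk hbase i
      induction i with
      | zero => intro _; simpa using hbase
      | succ i ih =>
        intro him
        have hi : i ≤ m := le_trans (Nat.le_succ i) him
        have h1 := hHrec k hk (i+1) (Finset.mem_Icc.mpr ⟨Nat.le_add_left 1 i, him⟩)
        simp only [Nat.add_sub_cancel] at h1
        rw [h1]
        have h2 := (ih hi).add
          (hub (i+1) (Finset.mem_Icc.mpr ⟨Nat.le_add_left 1 i, him⟩) (x k (i+1)))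
        have hcast : ((((k-1)*m + (i+1) : ℕ) : ℝ) * C) = ((((k-1)*m + i : ℕ) : ℝ) * C) + C := by
          push_cast; ring
        rw [hcast, add_smul]
        convert h2 using 1
        abel
    have base0 : ∀ k, 1 ≤ k →
        (((((k-1)*m : ℕ) : ℝ) * C) • (1 : Matrix (Fin n) (Fin n) ℝ) - H k 0).PosSemidef := by
      intro k hk
      induction k, hk using Nat.le_induction with
      | base => rw [hH0]; simpa using Matrix.PosSemidef.zero
      | succ k hk ih =>
        rw [hHnext k hk]
        have h := inner_step k hk ih m le_rfl
        have he : (k-1)*m + m = (k+1-1)*m := by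
          rw [Nat.add_sub_cancel]
          calc (k-1)*m + m = (k-1+1)*m := (Nat.succ_mul _ _).symm
          _ = k*m := by rw [Nat.sub_add_cancel hk]
        rw [← he]
        simpa using h
    intro k hk
    exact inner_step k hk (base0 k hk)
  -- stepsize bound
  have hstep' : ∀ k, 1 ≤ k → α k / k ≤ max (1/(k:ℝ)) φ := by
    intro k hk
    have hk0 : (0:ℝ) < k := by exact_mod_cast hk
    rcases le_or_gt (αstar k) 1 with hcase | hcase
    · have h1 : α k ≤ 1 := le_trans (hstep k hk).2 (by rw [max_eq_left hcase])
      refine le_trans ?_ (le_max_left _ _)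
      gcongr
    · have hαle : α k ≤ αstar k := le_trans (hstep k hk).2 (by rw [max_eq_right hcase.le])
      suffices hss : αstar k ≤ φ * k by
        refine le_trans ?_ (le_max_right _ _)
        rw [div_le_iff₀ hk0]
        calc α k ≤ αstar k := hαle
        _ ≤ φ * k := hss
      have hne : x (k+1) 1 ≠ x k 1 := by
        intro hceq
        have h0 := hαstar k hk
        rw [if_neg (not_not_intro hceq)] at h0
        rw [h0] at hcase
        linarith
      set Δ := x (k+1) 1 - x k 1 with hΔ
      have hΔ0 : Δ ≠ 0 := sub_ne_zero.mpr hne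
      have hΔn : 0 < ‖Δ‖ := norm_pos_iff.mpr hΔ0
      have hkm : ((k-1)*m + m : ℕ) = k*m := by
        calc (k-1)*m + m = (k-1+1)*m := (Nat.succ_mul _ _).symm
        _ = k*m := by rw [Nat.sub_add_cancel hk]
      set N := (inner ℝ Δ ((Matrix.toEuclideanCLM (𝕜 := ℝ) (H k m)) Δ) : ℝ) with hN
      have hNub : N ≤ (k:ℝ) * m * C * ‖Δ‖^2 := by
        have h := INhelpers.qf_le_upper (hup' k hk m le_rfl) Δ
        rw [hkm] at h
        rw [hN]
        calc (inner ℝ Δ ((Matrix.toEuclideanCLM (𝕜 := ℝ) (H k m)) Δ) : ℝ)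
            ≤ ((k*m : ℕ):ℝ) * C * ‖Δ‖^2 := h
        _ = (k:ℝ) * m * C * ‖Δ‖^2 := by push_cast; ring
      have hNnn : 0 ≤ N := by
        have hA : (H k m).PosSemidef := by
          have h := hlow' k hk m le_rfl
          have hdec : H k m - ((((k-1)*m + m : ℕ):ℝ) * c) • 1
              + ((((k-1)*m + m : ℕ):ℝ) * c) • 1 = H k m := sub_add_cancel _ _
          rw [← hdec]
          exact h.add (INhelpers.smul_one_psd (mul_nonneg (Nat.cast_nonneg _) hc.le))
        exact INhelpers.qf_nonneg hA Δ
      set Dden := ‖Δ‖ * (∑ i ∈ Finset.Icc 2 m, ‖x k i - x k 1‖) + ((m:ℝ)/2)*‖Δ‖^2 with hDden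
      have hDd1 : ((m:ℝ)/2)*‖Δ‖^2 ≤ Dden := by
        have h0 : 0 ≤ ‖Δ‖ * (∑ i ∈ Finset.Icc 2 m, ‖x k i - x k 1‖) :=
          mul_nonneg (norm_nonneg _) (Finset.sum_nonneg fun _ _ => norm_nonneg _)
        rw [hDden]; linarith
      have hDd0 : 0 < ((m:ℝ)/2)*‖Δ‖^2 := mul_pos (div_pos hm0 two_pos) (pow_pos hΔn 2)
      have hαeq : αstar k = ((1-η)/C) * N / Dden := by
        rw [hαstar k hk, if_pos hne]
      have haux : 0 ≤ (1-η)/C := by positivity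
      calc αstar k = ((1-η)/C) * N / Dden := hαeq
      _ ≤ ((1-η)/C) * N / (((m:ℝ)/2)*‖Δ‖^2) :=
          div_le_div_of_nonneg_left (mul_nonneg haux hNnn) hDd0 hDd1
      _ ≤ ((1-η)/C) * ((k:ℝ) * m * C * ‖Δ‖^2) / (((m:ℝ)/2)*‖Δ‖^2) := by gcongr
      _ = 2*(1-η)*k := by
          have hm' : (m:ℝ) ≠ 0 := ne_of_gt hm0
          have hC' : C ≠ 0 := ne_of_gt hC
          have hΔ' : ‖Δ‖ ≠ 0 := ne_of_gt hΔn
          field_simp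
      _ ≤ φ * k := by
          rw [hφ]
          have h1 : 2*(1-η) ≤ 2*(1-η)*Q := le_mul_of_one_le_right (by positivity) hQ1
          exact mul_le_mul_of_nonneg_right h1 hk0.le
  -- main estimate
  have main : ∀ k, 2 ≤ k → ∀ i, 1 ≤ i → i ≤ m →
      ‖x k i - x k 1‖ ≤ (α k / k) * Bseq (1 + (2*Q/m) * max (1/(k:ℝ)) φ) s (i-1) *
        ‖∑ j ∈ Finset.Icc 1 m, g j (x k 1)‖ := by
    intro k hk2
    have hk1 : 1 ≤ k := le_trans one_le_two hk2
    have hk0 : (0:ℝ) < k := by exact_mod_cast hk1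
    have hk2' : (2:ℝ) ≤ k := by exact_mod_cast hk2
    set G := ‖∑ j ∈ Finset.Icc 1 m, g j (x k 1)‖ with hG
    set μ := max (1/(k:ℝ)) φ with hμ
    set r := 1 + (2*Q/m) * μ with hr
    have hμ0 : 0 ≤ μ := le_trans (by positivity) (le_max_left (1/(k:ℝ)) φ)
    have hr1 : (1:ℝ) ≤ r := by
      have h0 : 0 ≤ (2*Q/m)*μ := by positivity
      rw [hr]; linarith
    have hγnn : 0 ≤ α k / k := div_nonneg (hα k hk1).le hk0.le
    have hγμ : α k / k ≤ μ := hstep' k hk1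
    have hGnn : 0 ≤ G := norm_nonneg _
    have hBnn := fun j => INhelpers.Bseq_nonneg (le_trans zero_le_one hr1) hs0 j
    intro i
    induction i with
    | zero => intro h; exact absurd h (by norm_num)
    | succ i ih =>
      intro _ hi1m
      rcases Nat.eq_zero_or_pos i with rfl | hi
      · simp [Bseq]
      · have him : i ≤ m := le_trans (Nat.le_succ i) hi1m
        have hmem : i ∈ Finset.Icc 1 m := Finset.mem_Icc.mpr ⟨hi, him⟩
        have IH := ih hi him
        set D := ‖x k i - x k 1‖ with hD
        set w := (Matrix.toEuclideanCLM (𝕜 := ℝ) (H k i)⁻¹) (g i (x k i)) with hw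
        have hxstep := hiter k hk1 i hmem
        rw [← hw] at hxstep
        have est1 : ‖x k (i+1) - x k 1‖ ≤ D + α k * ‖w‖ := by
          rw [hxstep]
          have heq : x k i - α k • w - x k 1 = (x k i - x k 1) - α k • w := by abel
          rw [heq]
          refine le_trans (norm_sub_le _ _) ?_
          rw [norm_smul, Real.norm_eq_abs, abs_of_pos (hα k hk1), hD]
        have hnat : 0 < (k-1)*m + i := Nat.lt_of_lt_of_le hi (Nat.le_add_left i _)
        have hnatR : (0:ℝ) < (((k-1)*m + i : ℕ):ℝ) := by exact_mod_cast hnat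
        have hapos : (0:ℝ) < (((k-1)*m + i : ℕ):ℝ) * c := mul_pos hnatR hc
        have hwle : ‖w‖ ≤ ‖g i (x k i)‖ / ((((k-1)*m + i : ℕ):ℝ) * c) := by
          rw [hw]
          exact INhelpers.norm_inv_toE_le hapos (hlow' k hk1 i him) _
        have hden : (k:ℝ)*m*c/2 ≤ (((k-1)*m + i : ℕ):ℝ) * c := by
          have hc1 : ((((k-1)*m + i : ℕ)):ℝ) = ((k:ℝ)-1)*m + i := by
            push_cast [Nat.cast_sub hk1]
            ring
          rw [hc1]
          have h1 : (k:ℝ)/2 ≤ (k:ℝ)-1 := by linarith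
          have h2 : (k:ℝ)/2 * m ≤ ((k:ℝ)-1)*m + i := by
            have hi0 : (0:ℝ) ≤ (i:ℕ) := Nat.cast_nonneg i
            nlinarith
          calc (k:ℝ)*m*c/2 = ((k:ℝ)/2*m)*c := by ring
          _ ≤ (((k:ℝ)-1)*m + (i:ℕ))*c := mul_le_mul_of_nonneg_right h2 hc.le
        have hkmc : (0:ℝ) < (k:ℝ)*m*c/2 := by positivity
        have hwle2 : ‖w‖ ≤ 2*‖g i (x k i)‖/((k:ℝ)*m*c) := by
          calc ‖w‖ ≤ ‖g i (x k i)‖ / ((((k-1)*m + i : ℕ):ℝ) * c) := hwle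
          _ ≤ ‖g i (x k i)‖ / ((k:ℝ)*m*c/2) :=
              div_le_div_of_nonneg_left (norm_nonneg _) hkmc hden
          _ = 2*‖g i (x k i)‖/((k:ℝ)*m*c) := by
              rw [div_div_eq_mul_div]
              ring
        have hlipg : ‖g i (x k i)‖ ≤ M * G + C * D := by
          have h1 := INhelpers.lip_of_hess hc hcC (hhess i hmem) (hlb i hmem) (hub i hmem)
            (x k i) (x k 1)
          have h2 := hgg i hmem (x k 1)
          rw [← hG] at h2
          calc ‖g i (x k i)‖ = ‖g i (x k 1) + (g i (x k i) - g i (x k 1))‖ := by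
                rw [add_sub_cancel]
          _ ≤ ‖g i (x k 1)‖ + ‖g i (x k i) - g i (x k 1)‖ := norm_add_le _ _
          _ ≤ M * G + C * D := by rw [hD]; exact add_le_add h2 h1
        have total : ‖x k (i+1) - x k 1‖ ≤ D + α k * (2*(M*G + C*D)/((k:ℝ)*m*c)) := by
          refine le_trans est1 ?_
          have h3 : α k * ‖w‖ ≤ α k * (2*(M*G + C*D)/((k:ℝ)*m*c)) := by
            apply mul_le_mul_of_nonneg_left ?_ (hα k hk1).le
            refine le_trans hwle2 ?_
            have hkmc0 : (0:ℝ) < (k:ℝ)*m*c := by positivity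
            rw [div_le_div_iff_of_pos_right hkmc0]
            linarith
          linarith
        have hBi : Bseq r s i = r * Bseq r s (i-1) + s := by
          obtain ⟨j, rfl⟩ : ∃ j, i = j + 1 := ⟨i-1, (Nat.succ_pred_eq_of_pos hi).symm⟩
          simp only [Nat.add_sub_cancel, Bseq]
        simp only [Nat.add_sub_cancel]
        rw [hBi]
        have hm' : (m:ℝ) ≠ 0 := ne_of_gt hm0
        have hc' : c ≠ 0 := ne_of_gt hc
        have hk' : (k:ℝ) ≠ 0 := ne_of_gt hk0
        have e1 : α k * (2*(M*G + C*D)/((k:ℝ)*m*c)) = (2*Q/m)*(α k/k)*D + (α k/k)*s*G := by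
          rw [hQ, hs_def]
          field_simp
          ring
        have e2 : (2*Q/m)*(α k/k)*D ≤ (2*Q/m)*μ*(α k/k * Bseq r s (i-1) * G) := by
          have h1 : (2*Q/m)*(α k/k) ≤ (2*Q/m)*μ := by
            apply mul_le_mul_of_nonneg_left hγμ (by positivity)
          exact mul_le_mul h1 IH (norm_nonneg _) (by positivity)
        have e3 : D ≤ α k/k * Bseq r s (i-1) * G := IH
        have expand : (α k/k) * (r * Bseq r s (i-1) + s) * G
            = (α k/k * Bseq r s (i-1) * G) + (2*Q/m)*μ*(α k/k * Bseq r s (i-1) * G)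
              + (α k/k)*s*G := by
          rw [hr]; ring
        rw [expand]
        linarith
  constructor
  · intro k hk i hi
    exact main k hk i (Finset.mem_Icc.mp hi).1 (Finset.mem_Icc.mp hi).2
  · intro i _
    have hev : ∀ᶠ (k:ℕ) in atTop, (1:ℝ)/k ≤ φ := by
      have h := tendsto_one_div_atTop_nhds_zero_nat (𝕜 := ℝ)
      exact h.eventually (eventually_le_nhds hφpos)
    have hev2 : (fun _ : ℕ => Bseq (1 + (2*Q/m) * φ) s (i-1)) =ᶠ[atTop]
        (fun k : ℕ => Bseq (1 + (2*Q/m) * max (1/(k:ℝ)) φ) s (i-1)) := by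
      filter_upwards [hev] with k hk
      rw [max_eq_right hk]
    exact Filter.Tendsto.congr' hev2 tendsto_const_nhds
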